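/- Let H be a Hermitian operator on a finite-dimensional complex Hilbert space and β > 0. Define the Gibbs state γ(x) := e^{−xH}/tr(e^{−xH}) for x ∈ ℝ, and the nonequilibrium free energy F(x) := tr(H γ(x)) − β⁻¹ S(γ(x)), where S(ρ) = −tr(ρ log ρ). Then F is differentiable on ℝ with d/dx F(x) = (x/β − 1)·Var_{γ(x)}(H), where Var_{γ(x)}(H) := tr(H² γ(x)) − (tr(H γ(x)))². In particular, if H is not a scalar multiple of the identity, F is strictly decreasing on (−∞, β), attains its unique minimum at x = β, and is strictly increasing on (β, ∞). -/

import Mathlib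

open Matrix BigOperators

noncomputable section

/-- The Gibbs state `γ(x) = e^{−xH}/tr(e^{−xH})`. -/
def gibbs {d : ℕ} (H : Matrix (Fin d) (Fin d) ℂ) (x : ℝ) : Matrix (Fin d) (Fin d) ℂ :=
  ((NormedSpace.exp ((-x : ℂ) • H)).trace)⁻¹ • NormedSpace.exp ((-x : ℂ) • H)

/-- Von Neumann entropy `S(ρ) = −tr(ρ log ρ)`, computed via the eigenvalues of a
Hermitian matrix (junk value `0` for non-Hermitian input). -/
def vnEntropy {m : Type} [Fintype m] [DecidableEq m] (ρ : Matrix m m ℂ) : ℝ :=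
  if h : ρ.IsHermitian then ∑ i, Real.negMulLog (h.eigenvalues i) else 0

/-- The nonequilibrium free energy `F(x) = tr(H γ(x)) − β⁻¹ S(γ(x))`. -/
def freeEnergy {d : ℕ} (H : Matrix (Fin d) (Fin d) ℂ) (β x : ℝ) : ℝ :=
  ((H * gibbs H x).trace).re - β⁻¹ * vnEntropy (gibbs H x)

/-- The energy variance `Var_{γ(x)}(H) = tr(H² γ(x)) − tr(H γ(x))²`. -/
def varGibbs {d : ℕ} (H : Matrix (Fin d) (Fin d) ℂ) (x : ℝ) : ℝ :=
  ((H * H * gibbs H x).trace).re - (((H * gibbs H x).trace).re) ^ 2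

/- ======================= Auxiliary lemmas ======================= -/

open Polynomial Finset in
lemma FE.charpoly_diagonal' {n : Type} [Fintype n] [DecidableEq n] (v : n → ℂ) :
    (Matrix.diagonal v).charpoly = ∏ i, (X - C (v i)) := by
  have h : charmatrix (Matrix.diagonal v) = Matrix.diagonal fun i => X - C (v i) := by
    ext i j
    by_cases h : i = j
    · subst h; simp
    · simp [h, Matrix.diagonal_apply_ne _ h]
  rw [Matrix.charpoly, h, Matrix.det_diagonal]

open Polynomial Finset in
lemma FE.charpoly_conj_unitary {n : Type} [Fintype n] [DecidableEq n]
    (W : Matrix.unitaryGroup n ℂ) (A : Matrix n n ℂ) :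
    ((W : Matrix n n ℂ) * A * star (W : Matrix n n ℂ)).charpoly = A.charpoly := by
  set w : Matrix n n ℂ := (W : Matrix n n ℂ)
  have h1 : star w * w = 1 := (Unitary.mem_iff.mp W.2).1
  have h2 : w * star w = 1 := (Unitary.mem_iff.mp W.2).2
  have hcomm := (Matrix.scalar_commute (n := n) (X : ℂ[X]) (fun r' => Commute.all _ _)
    ((C : ℂ →+* ℂ[X]).mapMatrix w)).symm
  have hc : charmatrix (w * A * star w)
      = (C : ℂ →+* ℂ[X]).mapMatrix w * charmatrix A * (C : ℂ →+* ℂ[X]).mapMatrix (star w) := by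
    simp only [charmatrix, mul_sub, sub_mul]
    congr 1
    · rw [hcomm, mul_assoc, ← RingHom.map_mul, h2, RingHom.map_one, mul_one]
    · rw [← RingHom.map_mul, ← RingHom.map_mul]
  have hdet : ((C : ℂ →+* ℂ[X]).mapMatrix w).det * ((C : ℂ →+* ℂ[X]).mapMatrix (star w)).det
      = 1 := by
    rw [← Matrix.det_mul, ← RingHom.map_mul, h2, RingHom.map_one, Matrix.det_one]
  rw [Matrix.charpoly, Matrix.charpoly, hc, Matrix.det_mul, Matrix.det_mul, mul_right_comm,
    hdet, one_mul]

open Polynomial Finset in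
/-- Sums of a function over the eigenvalues of a hermitian matrix can be computed from any
unitary diagonalization. -/
lemma FE.eig_sum_eq {n : Type} [Fintype n] [DecidableEq n] (W : Matrix.unitaryGroup n ℂ)
    (ν : n → ℝ) {ρ : Matrix n n ℂ}
    (heq : ρ = (W : Matrix n n ℂ) * Matrix.diagonal (fun i => ((ν i : ℝ) : ℂ))
      * star (W : Matrix n n ℂ))
    (hρ : ρ.IsHermitian) (g : ℝ → ℝ) :
    ∑ i, g (hρ.eigenvalues i) = ∑ i, g (ν i) := by
  have h1 : ρ.charpoly = ∏ i, (X - C ((hρ.eigenvalues i : ℝ) : ℂ)) := by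
    conv_lhs => rw [hρ.spectral_theorem]
    rw [Unitary.conjStarAlgAut_apply, FE.charpoly_conj_unitary, FE.charpoly_diagonal']
    simp [Function.comp]
  have h2 : ρ.charpoly = ∏ i, (X - C ((ν i : ℝ) : ℂ)) := by
    rw [heq, FE.charpoly_conj_unitary, FE.charpoly_diagonal']
  have hroots : ∀ f : n → ℂ,
      (∏ i, (X - C (f i))).roots = univ.val.map f := by
    intro f
    have h := Polynomial.roots_multiset_prod_X_sub_C (univ.val.map f)
    rw [Multiset.map_map] at h
    rw [Finset.prod_eq_multiset_prod]
    exact h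
  have h3 : (univ.val.map fun i => ((hρ.eigenvalues i : ℝ) : ℂ))
      = univ.val.map fun i => ((ν i : ℝ) : ℂ) := by
    have h := congrArg Polynomial.roots (h1.symm.trans h2)
    rwa [hroots, hroots] at h
  have h4 : univ.val.map hρ.eigenvalues = univ.val.map ν := by
    have := congrArg (Multiset.map Complex.re) h3
    simpa [Multiset.map_map, Function.comp] using this
  calc ∑ i, g (hρ.eigenvalues i) = ((univ.val.map hρ.eigenvalues).map g).sum := by
        rw [Multiset.map_map]; rfl
    _ = ((univ.val.map ν).map g).sum := by rw [h4]
    _ = ∑ i, g (ν i) := by rw [Multiset.map_map]; rfl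

open Finset in
lemma FE.var_pos {d : ℕ} (f p : Fin d → ℝ) (hp : ∀ i, 0 < p i) (hs : ∑ i, p i = 1)
    {i j : Fin d} (hij : f i ≠ f j) :
    0 < (∑ k, f k ^ 2 * p k) - (∑ k, f k * p k) ^ 2 := by
  set e := ∑ k, f k * p k with he
  have key : (∑ k, f k ^ 2 * p k) - e ^ 2 = ∑ k, p k * (f k - e) ^ 2 := by
    have h : ∑ k, p k * (f k - e) ^ 2
        = ∑ k, (f k ^ 2 * p k - 2 * e * (f k * p k) + e ^ 2 * p k) :=
      Finset.sum_congr rfl fun k _ => by ring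
    rw [h, Finset.sum_add_distrib, Finset.sum_sub_distrib, ← Finset.mul_sum, ← Finset.mul_sum,
      hs, ← he]
    ring
  rw [key]
  obtain ⟨k, hk⟩ : ∃ k, f k ≠ e := by
    by_contra h
    push_neg at h
    exact hij ((h i).trans (h j).symm)
  refine Finset.sum_pos' (fun k _ => mul_nonneg (hp k).le (sq_nonneg _))
    ⟨k, Finset.mem_univ k, ?_⟩
  exact mul_pos (hp k) (sq_pos_of_ne_zero (sub_ne_zero.mpr hk))

/-- Derivative of `x ↦ exp (-x * c)`. -/
lemma FE.hasDerivAt_exp_neg (c x : ℝ) :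
    HasDerivAt (fun y : ℝ => Real.exp (-y * c)) (Real.exp (-x * c) * -c) x := by
  simpa using ((hasDerivAt_id x).neg.mul_const c).exp

/- ======================= Main theorem ======================= -/

/-- derivative of the nonequilibrium free energy along the Gibbs
family, and its strict monotonicity/unique minimum at `x = β` for non-scalar
`H`. -/
theorem freeEnergy_deriv {d : ℕ} (hd : 0 < d) (H : Matrix (Fin d) (Fin d) ℂ)
    (hH : H.IsHermitian) (β : ℝ) (hβ : 0 < β) :
    (∀ x : ℝ, HasDerivAt (fun y => freeEnergy H β y) ((x / β - 1) * varGibbs H x) x) ∧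
    ((¬∃ c : ℂ, H = c • (1 : Matrix (Fin d) (Fin d) ℂ)) →
      StrictAntiOn (freeEnergy H β) (Set.Iic β) ∧
      StrictMonoOn (freeEnergy H β) (Set.Ici β) ∧
      ∀ y : ℝ, y ≠ β → freeEnergy H β β < freeEnergy H β y) := by
  have hd' : Nonempty (Fin d) := ⟨⟨0, hd⟩⟩
  set ev : Fin d → ℝ := hH.eigenvalues with hev
  set U : Matrix (Fin d) (Fin d) ℂ := (hH.eigenvectorUnitary : Matrix (Fin d) (Fin d) ℂ)
    with hUdef
  have hU1 : star U * U = 1 := (Unitary.mem_iff.mp hH.eigenvectorUnitary.2).1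
  have hU2 : U * star U = 1 := (Unitary.mem_iff.mp hH.eigenvectorUnitary.2).2
  have hUunit : IsUnit U := ⟨⟨U, star U, hU2, hU1⟩, rfl⟩
  have hUinv : U⁻¹ = star U := Matrix.inv_eq_left_inv hU1
  have hHspec : H = U * Matrix.diagonal (fun i => ((ev i : ℝ) : ℂ)) * star U :=
    hH.spectral_theorem
  -- the scalar functions
  set z : ℝ → ℝ := fun x => ∑ i, Real.exp (-x * ev i) with hz
  set nn : ℝ → ℝ := fun x => ∑ i, ev i * Real.exp (-x * ev i) with hnn
  set mm : ℝ → ℝ := fun x => ∑ i, ev i ^ 2 * Real.exp (-x * ev i) with hmm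
  have hzpos : ∀ x, 0 < z x := fun x =>
    Finset.sum_pos (fun i _ => Real.exp_pos _) Finset.univ_nonempty
  have hzne : ∀ x, z x ≠ 0 := fun x => ne_of_gt (hzpos x)
  -- conjugation helpers
  have hconjmul : ∀ A B : Matrix (Fin d) (Fin d) ℂ,
      (U * A * star U) * (U * B * star U) = U * (A * B) * star U := by
    intro A B
    calc (U * A * star U) * (U * B * star U) = U * A * (star U * U) * B * star U := by
          simp only [Matrix.mul_assoc]
      _ = U * (A * B) * star U := by rw [hU1]; simp only [Matrix.mul_assoc, Matrix.one_mul]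
  have hconjtr : ∀ A : Matrix (Fin d) (Fin d) ℂ, (U * A * star U).trace = A.trace := by
    intro A
    rw [Matrix.trace_mul_cycle, hU1, Matrix.one_mul]
  -- the matrix exponential
  have hexp : ∀ x : ℝ, NormedSpace.exp ((-x : ℂ) • H)
      = U * Matrix.diagonal (fun i => ((Real.exp (-x * ev i) : ℝ) : ℂ)) * star U := by
    intro x
    have h1 : (-x : ℂ) • H
        = U * ((-x : ℂ) • Matrix.diagonal (fun i => ((ev i : ℝ) : ℂ))) * star U := by
      conv_lhs => rw [hHspec]
      simp only [Matrix.smul_mul, Matrix.mul_smul]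
    have h2 : NormedSpace.exp ((-x : ℂ) • fun i => ((ev i : ℝ) : ℂ))
        = fun i : Fin d => ((Real.exp (-x * ev i) : ℝ) : ℂ) := by
      rw [Pi.exp_def]
      funext i
      rw [Pi.smul_apply, smul_eq_mul, ← Complex.exp_eq_exp_ℂ, Complex.ofReal_exp]
      congr 1
      push_cast
      ring
    rw [h1, ← hUinv, Matrix.exp_conj U _ hUunit, hUinv, ← Matrix.diagonal_smul,
      Matrix.exp_diagonal, h2]
  have htrexp : ∀ x : ℝ, (NormedSpace.exp ((-x : ℂ) • H)).trace = ((z x : ℝ) : ℂ) := by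
    intro x
    rw [hexp x, hconjtr, Matrix.trace_diagonal, hz]
    push_cast
    rfl
  -- the Gibbs state
  have hgibbs : ∀ x : ℝ, gibbs H x
      = U * Matrix.diagonal (fun i => ((Real.exp (-x * ev i) / z x : ℝ) : ℂ)) * star U := by
    intro x
    have hD : (Matrix.diagonal fun i => ((Real.exp (-x * ev i) / z x : ℝ) : ℂ))
        = ((z x : ℝ) : ℂ)⁻¹ • Matrix.diagonal fun i => ((Real.exp (-x * ev i) : ℝ) : ℂ) := by
      have hfun : (fun i => ((Real.exp (-x * ev i) / z x : ℝ) : ℂ))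
          = ((z x : ℝ) : ℂ)⁻¹ • fun i => ((Real.exp (-x * ev i) : ℝ) : ℂ) := by
        funext i
        rw [Pi.smul_apply, smul_eq_mul]
        push_cast
        rw [div_eq_inv_mul]
      rw [hfun, Matrix.diagonal_smul]
    rw [gibbs, htrexp x, hexp x, hD, Matrix.mul_smul, Matrix.smul_mul]
  have hgherm : ∀ x : ℝ, (gibbs H x).IsHermitian := by
    intro x
    rw [hgibbs x, Matrix.IsHermitian]
    rw [Matrix.conjTranspose_mul, Matrix.conjTranspose_mul, Matrix.diagonal_conjTranspose]
    have : star (fun i => ((Real.exp (-x * ev i) / z x : ℝ) : ℂ))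
        = fun i => ((Real.exp (-x * ev i) / z x : ℝ) : ℂ) := by
      funext i
      simp only [Pi.star_apply]
      exact Complex.conj_ofReal _
    rw [this, Matrix.star_eq_conjTranspose, Matrix.conjTranspose_conjTranspose]
    simp only [Matrix.mul_assoc]
  -- traces
  have htrHg : ∀ x : ℝ, (H * gibbs H x).trace = ((nn x / z x : ℝ) : ℂ) := by
    intro x
    rw [hgibbs x]
    conv_lhs => rw [hHspec]
    rw [hconjmul, hconjtr, Matrix.diagonal_mul_diagonal, Matrix.trace_diagonal, hnn,
      Finset.sum_div]
    push_cast
    refine Finset.sum_congr rfl fun i _ => ?_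
    rw [mul_div_assoc]
  have htrH2g : ∀ x : ℝ, (H * H * gibbs H x).trace = ((mm x / z x : ℝ) : ℂ) := by
    intro x
    rw [hgibbs x]
    conv_lhs => rw [hHspec]
    rw [Matrix.mul_assoc (U * Matrix.diagonal _ * star U), hconjmul, hconjmul,
      hconjtr, Matrix.diagonal_mul_diagonal, Matrix.diagonal_mul_diagonal,
      Matrix.trace_diagonal, hmm, Finset.sum_div]
    push_cast
    refine Finset.sum_congr rfl fun i _ => ?_
    ring
  -- entropy
  have hent : ∀ x : ℝ, vnEntropy (gibbs H x) = x * (nn x / z x) + Real.log (z x) := by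
    intro x
    rw [vnEntropy, dif_pos (hgherm x)]
    rw [FE.eig_sum_eq hH.eigenvectorUnitary (fun i => Real.exp (-x * ev i) / z x)
      (hgibbs x) (hgherm x) Real.negMulLog]
    have hterm : ∀ i : Fin d, Real.negMulLog (Real.exp (-x * ev i) / z x)
        = (x * (ev i * Real.exp (-x * ev i)) + Real.exp (-x * ev i) * Real.log (z x)) / z x := by
      intro i
      rw [Real.negMulLog, Real.log_div (Real.exp_ne_zero _) (hzne x), Real.log_exp]
      field_simp
      ring
    rw [Finset.sum_congr rfl fun i _ => hterm i, ← Finset.sum_div, Finset.sum_add_distrib,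
      ← Finset.mul_sum, ← Finset.sum_mul]
    have e1 : (∑ i, ev i * Real.exp (-x * ev i)) = nn x := rfl
    have e2 : (∑ i, Real.exp (-x * ev i)) = z x := rfl
    rw [e1, e2, add_div, mul_div_assoc, mul_div_cancel_left₀ _ (hzne x)]
  -- free energy and variance in scalar form
  have hfree : ∀ x : ℝ, freeEnergy H β x
      = nn x / z x - β⁻¹ * (x * (nn x / z x) + Real.log (z x)) := by
    intro x
    rw [freeEnergy, htrHg x, hent x, Complex.ofReal_re]
  have hvar : ∀ x : ℝ, varGibbs H x = mm x / z x - (nn x / z x) ^ 2 := by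
    intro x
    rw [varGibbs, htrHg x, htrH2g x, Complex.ofReal_re, Complex.ofReal_re]
  -- derivatives of the scalar functions
  have hZ' : ∀ x : ℝ, HasDerivAt z (-(nn x)) x := by
    intro x
    have h := HasDerivAt.fun_sum (fun i (_ : i ∈ Finset.univ) => FE.hasDerivAt_exp_neg (ev i) x)
    have heq2 : -(nn x) = ∑ i, Real.exp (-x * ev i) * -(ev i) := by
      rw [hnn, ← Finset.sum_neg_distrib]
      exact Finset.sum_congr rfl fun i _ => by ring
    rw [heq2]
    exact h
  have hN' : ∀ x : ℝ, HasDerivAt nn (-(mm x)) x := by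
    intro x
    have h := HasDerivAt.fun_sum
      (fun i (_ : i ∈ Finset.univ) => (FE.hasDerivAt_exp_neg (ev i) x).const_mul (ev i))
    have heq2 : -(mm x) = ∑ i, ev i * (Real.exp (-x * ev i) * -(ev i)) := by
      rw [hmm, ← Finset.sum_neg_distrib]
      exact Finset.sum_congr rfl fun i _ => by ring
    rw [heq2]
    exact h
  -- the derivative of the free energy
  have hderiv : ∀ x : ℝ, HasDerivAt (fun y => freeEnergy H β y)
      ((x / β - 1) * varGibbs H x) x := by
    intro x
    have hE : HasDerivAt (fun y => nn y / z y)
        ((-(mm x) * z x - nn x * -(nn x)) / z x ^ 2) x := (hN' x).div (hZ' x) (hzne x)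
    have hL : HasDerivAt (fun y => Real.log (z y)) (-(nn x) / z x) x := (hZ' x).log (hzne x)
    have hxE : HasDerivAt (fun y => y * (nn y / z y))
        (1 * (nn x / z x) + x * ((-(mm x) * z x - nn x * -(nn x)) / z x ^ 2)) x :=
      (hasDerivAt_id x).mul hE
    have hG := hE.sub ((hxE.add hL).const_mul β⁻¹)
    have hfun : (fun y => freeEnergy H β y)
        = fun y => nn y / z y - β⁻¹ * (y * (nn y / z y) + Real.log (z y)) := by
      funext y; exact hfree y
    rw [hfun]
    refine hG.congr_deriv ?_
    rw [hvar x]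
    have hz2 : z x ≠ 0 := hzne x
    field_simp
    ring
  refine ⟨hderiv, fun hns => ?_⟩
  -- eigenvalues are not all equal
  obtain ⟨i0, j0, hij⟩ : ∃ i j : Fin d, ev i ≠ ev j := by
    by_contra h
    push_neg at h
    apply hns
    refine ⟨(ev (Classical.arbitrary (Fin d)) : ℂ), ?_⟩
    rw [hHspec, Matrix.smul_one_eq_diagonal]
    have hfun2 : (fun i : Fin d => ((ev i : ℝ) : ℂ))
        = fun _ => ((ev (Classical.arbitrary (Fin d)) : ℝ) : ℂ) := by
      funext i
      rw [h i (Classical.arbitrary (Fin d))]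
    rw [congrArg Matrix.diagonal hfun2]
    calc U * Matrix.diagonal (fun _ => ((ev (Classical.arbitrary (Fin d)) : ℝ) : ℂ)) * star U
        = U * (((ev (Classical.arbitrary (Fin d)) : ℝ) : ℂ) • 1) * star U := by
          rw [Matrix.smul_one_eq_diagonal]
      _ = ((ev (Classical.arbitrary (Fin d)) : ℝ) : ℂ) • (U * 1 * star U) := by
          simp only [Matrix.smul_mul, Matrix.mul_smul]
      _ = Matrix.diagonal fun _ => ((ev (Classical.arbitrary (Fin d)) : ℝ) : ℂ) := by
          rw [Matrix.mul_one, hU2, Matrix.smul_one_eq_diagonal]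
  -- variance is positive
  have hvarpos : ∀ x : ℝ, 0 < varGibbs H x := by
    intro x
    have hp : ∀ i : Fin d, 0 < Real.exp (-x * ev i) / z x :=
      fun i => div_pos (Real.exp_pos _) (hzpos x)
    have hs : ∑ i, Real.exp (-x * ev i) / z x = 1 := by
      have e2 : (∑ i, Real.exp (-x * ev i)) = z x := rfl
      rw [← Finset.sum_div, e2, div_self (hzne x)]
    have h := FE.var_pos ev (fun i => Real.exp (-x * ev i) / z x) hp hs hij
    rw [hvar x]
    have h1 : mm x / z x = ∑ k, ev k ^ 2 * (Real.exp (-x * ev k) / z x) := by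
      rw [hmm, Finset.sum_div]
      exact Finset.sum_congr rfl fun k _ => (mul_div_assoc _ _ _)
    have h2 : nn x / z x = ∑ k, ev k * (Real.exp (-x * ev k) / z x) := by
      rw [hnn, Finset.sum_div]
      exact Finset.sum_congr rfl fun k _ => (mul_div_assoc _ _ _)
    rw [h1, h2]
    exact h
  -- continuity and deriv values
  have hdiff : Differentiable ℝ (freeEnergy H β) := fun x => (hderiv x).differentiableAt
  have hderiveq : ∀ x : ℝ, deriv (freeEnergy H β) x = (x / β - 1) * varGibbs H x :=
    fun x => (hderiv x).deriv
  have hanti : StrictAntiOn (freeEnergy H β) (Set.Iic β) := by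
    refine strictAntiOn_of_deriv_neg (convex_Iic β) hdiff.continuous.continuousOn ?_
    intro x hx
    rw [interior_Iic] at hx
    rw [hderiveq x]
    apply mul_neg_of_neg_of_pos _ (hvarpos x)
    have : x / β < 1 := (div_lt_one hβ).mpr hx
    linarith
  have hmono : StrictMonoOn (freeEnergy H β) (Set.Ici β) := by
    refine strictMonoOn_of_deriv_pos (convex_Ici β) hdiff.continuous.continuousOn ?_
    intro x hx
    rw [interior_Ici] at hx
    rw [hderiveq x]
    apply mul_pos _ (hvarpos x)
    have : 1 < x / β := (one_lt_div hβ).mpr hx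
    linarith
  refine ⟨hanti, hmono, fun y hy => ?_⟩
  rcases hy.lt_or_gt with h | h
  · exact hanti (le_of_lt h) (le_refl β) h
  · exact hmono (le_refl β) (le_of_lt h) h
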